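/- Let E be a regular sublinear expectation on the space X of bounded measurable real-valued functions on (Ω, F), with upper capacity C(A) := E(1_A). If {ξ_n}_{n≥1} ⊂ X is a Cauchy sequence in capacity (i.e. for all ε, δ > 0 there exists N such that C({|ξ_n − ξ_m| > ε}) < δ for all m, n ≥ N), then there exists a subsequence {ξ_{n_k}}_{k≥1} and a random variable ξ such that ξ_{n_k} → ξ pointwise outside a C-polar set. -/

import Mathlib

open MeasureTheory Set Filter Topology Classical

/-- The space of bounded measurable real-valued functions on `Ω`, as a submodule of `Ω → ℝ`. -/
def BM (Ω : Type*) [MeasurableSpace Ω] : Submodule ℝ (Ω → ℝ) where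
  carrier := {f | Measurable f ∧ ∃ M : ℝ, ∀ ω, |f ω| ≤ M}
  zero_mem' := ⟨measurable_const, 0, by simp⟩
  add_mem' := by
    rintro f g ⟨hf, Mf, hMf⟩ ⟨hg, Mg, hMg⟩
    exact ⟨hf.add hg, Mf + Mg, fun ω => (abs_add_le _ _).trans (add_le_add (hMf ω) (hMg ω))⟩
  smul_mem' := by
    rintro c f ⟨hf, Mf, hMf⟩
    refine ⟨hf.const_smul c, |c| * Mf, fun ω => ?_⟩
    simp only [Pi.smul_apply, smul_eq_mul, abs_mul]
    exact mul_le_mul_of_nonneg_left (hMf ω) (abs_nonneg c)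

variable {Ω : Type*} [MeasurableSpace Ω]

lemma mem_BM {f : Ω → ℝ} (hf : Measurable f) (M : ℝ) (hM : ∀ ω, |f ω| ≤ M) : f ∈ BM Ω :=
  ⟨hf, M, hM⟩

lemma BM.measurable (ξ : BM Ω) : Measurable (ξ : Ω → ℝ) := ξ.2.1

lemma BM.bounded (ξ : BM Ω) : ∃ M : ℝ, ∀ ω, |(ξ : Ω → ℝ) ω| ≤ M := ξ.2.2

/-- A sublinear expectation on the space of bounded measurable functions. -/
structure SLE (Ω : Type*) [MeasurableSpace Ω] where
  E : BM Ω → ℝ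
  mono : ∀ ξ η : BM Ω, (∀ ω, (η : Ω → ℝ) ω ≤ (ξ : Ω → ℝ) ω) → E η ≤ E ξ
  const_preserve : ∀ (c : ℝ) (h : (fun _ : Ω => c) ∈ BM Ω), E ⟨fun _ => c, h⟩ = c
  subadd : ∀ ξ η : BM Ω, E (ξ + η) ≤ E ξ + E η
  pos_homog : ∀ (c : ℝ), 0 ≤ c → ∀ ξ : BM Ω, E (c • ξ) = c * E ξ

/-- The constant function as an element of `BM Ω`. -/
def constBM (Ω : Type*) [MeasurableSpace Ω] (c : ℝ) : BM Ω :=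
  ⟨fun _ => c, mem_BM measurable_const |c| fun _ => le_refl _⟩

/-- The indicator function of a measurable set as an element of `BM Ω`. -/
noncomputable def indBM {Ω : Type*} [MeasurableSpace Ω] (A : Set Ω) (hA : MeasurableSet A) : BM Ω :=
  ⟨A.indicator fun _ => 1,
    mem_BM (measurable_const.indicator hA) 1 fun ω => by
      by_cases h : ω ∈ A <;> simp [Set.indicator_apply, h]⟩

/-- The product of two bounded measurable functions. -/
noncomputable def mulBM (ξ η : BM Ω) : BM Ω := by
  refine ⟨fun ω => (ξ : Ω → ℝ) ω * (η : Ω → ℝ) ω, ?_⟩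
  obtain ⟨Mf, hMf⟩ := BM.bounded ξ
  obtain ⟨Mg, hMg⟩ := BM.bounded η
  refine mem_BM ((BM.measurable ξ).mul (BM.measurable η)) (max Mf 0 * max Mg 0) fun ω => ?_
  rw [abs_mul]
  exact mul_le_mul ((hMf ω).trans (le_max_left _ _)) ((hMg ω).trans (le_max_left _ _))
    (abs_nonneg _) (le_max_right _ _)

/-- The upper capacity associated to a sublinear expectation: `C(A) = E(1_A)` for measurable `A`
(junk value `0` on non-measurable sets). -/
noncomputable def SLE.cap (𝔼 : SLE Ω) (A : Set Ω) : ℝ :=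
  if h : MeasurableSet A then 𝔼.E (indBM A h) else 0

/-- The lower capacity associated to a sublinear expectation: `c(A) = -E(-1_A)` for measurable `A`
(junk value `0` on non-measurable sets). -/
noncomputable def SLE.lcap (𝔼 : SLE Ω) (A : Set Ω) : ℝ :=
  if h : MeasurableSet A then -𝔼.E (-(indBM A h)) else 0

/-- A linear expectation dominated by the sublinear expectation `𝔼`. -/
def Dominated (𝔼 : SLE Ω) (L : BM Ω →ₗ[ℝ] ℝ) : Prop := ∀ ξ : BM Ω, L ξ ≤ 𝔼.E ξ

/-- `ξ` and `η` are uncorrelated with respect to `𝔼` if `L(ξη) = L(ξ)L(η)` for every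
linear expectation `L` dominated by `𝔼`. -/
def Uncorrelated (𝔼 : SLE Ω) (ξ η : BM Ω) : Prop :=
  ∀ L : BM Ω →ₗ[ℝ] ℝ, Dominated 𝔼 L → L (mulBM ξ η) = L ξ * L η

/-- `𝔼` is regular: if `ξ n ↓ 0` pointwise then `𝔼.E (ξ n) ↓ 0`. -/
def SLE.Regular (𝔼 : SLE Ω) : Prop :=
  ∀ ξ : ℕ → BM Ω, (∀ ω, Antitone fun n => (ξ n : Ω → ℝ) ω) →
    (∀ ω, Tendsto (fun n => (ξ n : Ω → ℝ) ω) atTop (𝓝 0)) →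
    Tendsto (fun n => 𝔼.E (ξ n)) atTop (𝓝 0)

/-- The σ-field generated by `ξ a, …, ξ b`. -/
def sigmaGen (ξ : ℕ → BM Ω) (a b : ℕ) : MeasurableSpace Ω :=
  ⨆ i ∈ Set.Icc a b, MeasurableSpace.comap (fun ω => (ξ i : Ω → ℝ) ω) inferInstance

/-- `{ξ_n}_{n ≥ 1}` is an independent sequence under `𝔼`: pairwise uncorrelated, and
`C(A ∩ B) ≤ C(A) C(B)` whenever `A ∈ σ(ξ_1, …, ξ_m)` and `B ∈ σ(ξ_{m+1}, …, ξ_n)`, `m < n`. -/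
def IndepSeq (𝔼 : SLE Ω) (ξ : ℕ → BM Ω) : Prop :=
  (∀ i j, 1 ≤ i → 1 ≤ j → i ≠ j → Uncorrelated 𝔼 (ξ i) (ξ j)) ∧
  ∀ m n : ℕ, 1 ≤ m → m < n → ∀ A B : Set Ω,
    MeasurableSet[sigmaGen ξ 1 m] A → MeasurableSet[sigmaGen ξ (m + 1) n] B →
    𝔼.cap (A ∩ B) ≤ 𝔼.cap A * 𝔼.cap B

/-- Assumption (H₀): for every disjoint measurable cover `{A_n}` of `Ω`,
the series `Σ C(A_n)` has bounded partial sums. -/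
def H0 (𝔼 : SLE Ω) : Prop :=
  ∀ A : ℕ → Set Ω, (∀ n, MeasurableSet (A n)) → Pairwise (Function.onFun Disjoint A) →
    (⋃ n, A n) = Set.univ → ∃ M : ℝ, ∀ N : ℕ, ∑ n ∈ Finset.range N, 𝔼.cap (A n) < M

lemma SLE.E_zero' (𝔼 : SLE Ω) : 𝔼.E 0 = 0 := 𝔼.const_preserve 0 ((BM Ω).zero_mem)

lemma SLE.E_nonneg' (𝔼 : SLE Ω) (η : BM Ω) (h : ∀ ω, 0 ≤ (η : Ω → ℝ) ω) : 0 ≤ 𝔼.E η := by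
  rw [← 𝔼.E_zero']
  exact 𝔼.mono η 0 (by simpa using h)

lemma indBM_apply {A : Set Ω} (hA : MeasurableSet A) (ω : Ω) :
    (indBM A hA : Ω → ℝ) ω = A.indicator (fun _ => (1:ℝ)) ω := rfl

lemma SLE.cap_nonneg' (𝔼 : SLE Ω) (A : Set Ω) : 0 ≤ 𝔼.cap A := by
  unfold SLE.cap
  split
  · exact 𝔼.E_nonneg' _ (fun ω => Set.indicator_nonneg (fun _ _ => zero_le_one) ω)
  · exact le_refl _

lemma SLE.cap_mono' (𝔼 : SLE Ω) {A B : Set Ω} (hA : MeasurableSet A) (hB : MeasurableSet B)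
    (hsub : A ⊆ B) : 𝔼.cap A ≤ 𝔼.cap B := by
  rw [SLE.cap, SLE.cap, dif_pos hA, dif_pos hB]
  exact 𝔼.mono _ _ (fun ω =>
    Set.indicator_le_indicator_of_subset hsub (fun _ => zero_le_one) ω)

lemma SLE.E_sum_le' (𝔼 : SLE Ω) (s : Finset ℕ) (f : ℕ → BM Ω) :
    𝔼.E (∑ i ∈ s, f i) ≤ ∑ i ∈ s, 𝔼.E (f i) := by
  classical
  induction s using Finset.induction with
  | empty => simp [𝔼.E_zero']
  | insert _ _ h ih =>
    rw [Finset.sum_insert h, Finset.sum_insert h]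
    exact (𝔼.subadd _ _).trans (by linarith)

/-- If `{ξ_n}` is Cauchy in capacity under a regular sublinear expectation,
then some subsequence converges pointwise outside a `C`-polar set to a random variable. -/
theorem cauchy_in_capacity_has_qs_convergent_subsequence (𝔼 : SLE Ω) (hreg : 𝔼.Regular)
    (ξ : ℕ → BM Ω)
    (hcauchy : ∀ ε > 0, ∀ δ > 0, ∃ N : ℕ, ∀ m ≥ N, ∀ n ≥ N,
      𝔼.cap {ω | ε < |(ξ n : Ω → ℝ) ω - (ξ m : Ω → ℝ) ω|} < δ) :
    ∃ φ : ℕ → ℕ, StrictMono φ ∧ ∃ ξ₀ : Ω → ℝ, Measurable ξ₀ ∧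
      ∃ N : Set Ω, MeasurableSet N ∧ 𝔼.cap N = 0 ∧ ∀ ω ∉ N,
        Tendsto (fun k => (ξ (φ k) : Ω → ℝ) ω) atTop (𝓝 (ξ₀ ω)) := by
  classical
  have hpos : ∀ k : ℕ, (0:ℝ) < (1/2)^k := fun k => by positivity
  choose Nf hNf using fun k => hcauchy ((1/2)^k) (hpos k) ((1/2)^k) (hpos k)
  set φ : ℕ → ℕ := fun k => k + (Finset.range (k+1)).sup Nf with hφdef
  have hφmono : StrictMono φ := by
    intro a b hab
    have hs : (Finset.range (a+1)).sup Nf ≤ (Finset.range (b+1)).sup Nf :=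
      Finset.sup_mono (Finset.range_subset_range.2 (by omega))
    simp only [hφdef]
    omega
  have hφge : ∀ k, Nf k ≤ φ k := fun k =>
    le_trans (Finset.le_sup (Finset.mem_range.2 (Nat.lt_succ_self k))) (Nat.le_add_left _ _)
  have hφge' : ∀ k, Nf k ≤ φ (k+1) := fun k =>
    le_trans (Finset.le_sup (Finset.mem_range.2 (by omega))) (Nat.le_add_left _ _)
  set D : ℕ → Set Ω :=
    fun k => {ω | (1/2)^k < |(ξ (φ (k+1)) : Ω → ℝ) ω - (ξ (φ k) : Ω → ℝ) ω|} with hDdef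
  have hDm : ∀ k, MeasurableSet (D k) := fun k =>
    measurableSet_lt measurable_const
      (((BM.measurable (ξ (φ (k+1)))).sub (BM.measurable (ξ (φ k)))).abs)
  have hDcap : ∀ k, 𝔼.cap (D k) < (1/2)^k := fun k =>
    hNf k (φ k) (hφge k) (φ (k+1)) (hφge' k)
  set B : ℕ → Set Ω := fun m => ⋃ k, D (m + k) with hBdef
  have hBm : ∀ m, MeasurableSet (B m) := fun m => MeasurableSet.iUnion fun k => hDm _
  set Nset : Set Ω := ⋂ m, B m with hNdef
  have hNm : MeasurableSet Nset := MeasurableSet.iInter hBm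
  -- capacity bound on B m
  have hcapB : ∀ m, 𝔼.cap (B m) ≤ 2 * (1/2)^m := by
    intro m
    set S : ℕ → BM Ω := fun n => ∑ k ∈ Finset.range (n+1), indBM (D (m+k)) (hDm (m+k))
      with hSdef
    have hSapp : ∀ n ω, (S n : Ω → ℝ) ω
        = ∑ k ∈ Finset.range (n+1), (D (m+k)).indicator (fun _ => (1:ℝ)) ω := by
      intro n ω
      simp only [hSdef, AddSubmonoidClass.coe_finset_sum, Finset.sum_apply, indBM_apply]
    have hSnonneg : ∀ n ω, 0 ≤ (S n : Ω → ℝ) ω := by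
      intro n ω
      rw [hSapp]
      exact Finset.sum_nonneg fun k _ => Set.indicator_nonneg (fun _ _ => zero_le_one) ω
    have hSmono : ∀ n ω, (S n : Ω → ℝ) ω ≤ (S (n+1) : Ω → ℝ) ω := by
      intro n ω
      rw [hSapp, hSapp]
      exact Finset.sum_le_sum_of_subset_of_nonneg
        (Finset.range_subset_range.2 (by omega))
        (fun k _ _ => Set.indicator_nonneg (fun _ _ => zero_le_one) ω)
    have hgmem : ∀ n, (fun ω => max ((B m).indicator (fun _ => (1:ℝ)) ω - (S n : Ω → ℝ) ω) 0)
        ∈ BM Ω := by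
      intro n
      refine mem_BM (((measurable_const.indicator (hBm m)).sub (BM.measurable (S n))).max
        measurable_const) 1 fun ω => ?_
      rw [abs_le]
      constructor
      · linarith [le_max_right ((B m).indicator (fun _ => (1:ℝ)) ω - (S n : Ω → ℝ) ω) (0:ℝ)]
      · have h1 : (B m).indicator (fun _ => (1:ℝ)) ω ≤ 1 :=
          Set.indicator_le_self' (fun _ _ => zero_le_one) ω |>.trans (by
            by_cases h : ω ∈ B m <;> simp [Set.indicator_apply, h])
        have := hSnonneg n ω
        apply max_le <;> linarith
    set g : ℕ → BM Ω := fun n => ⟨_, hgmem n⟩ with hgdef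
    have hgapp : ∀ n ω, (g n : Ω → ℝ) ω
        = max ((B m).indicator (fun _ => (1:ℝ)) ω - (S n : Ω → ℝ) ω) 0 := fun n ω => rfl
    have hganti : ∀ ω, Antitone fun n => (g n : Ω → ℝ) ω := by
      intro ω
      apply antitone_nat_of_succ_le
      intro n
      rw [hgapp, hgapp]
      exact max_le_max (by linarith [hSmono n ω]) le_rfl
    have hgzero : ∀ ω, ∃ n0, ∀ n ≥ n0, (g n : Ω → ℝ) ω = 0 := by
      intro ω
      by_cases hω : ω ∈ B m
      · obtain ⟨k0, hk0⟩ : ∃ k0, ω ∈ D (m + k0) := Set.mem_iUnion.1 hω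
        refine ⟨k0, fun n hn => ?_⟩
        rw [hgapp]
        have h1 : (1:ℝ) ≤ (S n : Ω → ℝ) ω := by
          rw [hSapp]
          have : (D (m+k0)).indicator (fun _ => (1:ℝ)) ω = 1 := Set.indicator_of_mem hk0 _
          calc (1:ℝ) = (D (m+k0)).indicator (fun _ => (1:ℝ)) ω := this.symm
            _ ≤ _ := Finset.single_le_sum
              (f := fun k => (D (m+k)).indicator (fun _ => (1:ℝ)) ω)
              (fun k _ => Set.indicator_nonneg (fun _ _ => zero_le_one) ω)
              (Finset.mem_range.2 (by omega))
        have h2 : (B m).indicator (fun _ => (1:ℝ)) ω ≤ 1 := by simp [Set.indicator_apply, hω]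
        exact max_eq_right (by linarith)
      · refine ⟨0, fun n _ => ?_⟩
        rw [hgapp, Set.indicator_of_notMem hω]
        exact max_eq_right (by linarith [hSnonneg n ω])
    have hgtend : ∀ ω, Tendsto (fun n => (g n : Ω → ℝ) ω) atTop (𝓝 0) := by
      intro ω
      obtain ⟨n0, hn0⟩ := hgzero ω
      exact tendsto_atTop_of_eventually_const hn0
    have hEtend : Tendsto (fun n => 𝔼.E (g n)) atTop (𝓝 0) := hreg g hganti hgtend
    have hbound : ∀ n : ℕ, 𝔼.cap (B m) ≤ 𝔼.E (g n) + 2 * (1/2)^m := by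
      intro n
      have hpt : ∀ ω, (indBM (B m) (hBm m) : Ω → ℝ) ω ≤ ((g n + S n : BM Ω) : Ω → ℝ) ω := by
        intro ω
        have : ((g n + S n : BM Ω) : Ω → ℝ) ω = (g n : Ω → ℝ) ω + (S n : Ω → ℝ) ω := rfl
        rw [this, hgapp, indBM_apply]
        have := le_max_left ((B m).indicator (fun _ => (1:ℝ)) ω - (S n : Ω → ℝ) ω) (0:ℝ)
        linarith
      have h1 : 𝔼.cap (B m) ≤ 𝔼.E (g n + S n) := by
        rw [SLE.cap, dif_pos (hBm m)]
        exact 𝔼.mono _ _ hpt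
      have h2 : 𝔼.E (g n + S n) ≤ 𝔼.E (g n) + 𝔼.E (S n) := 𝔼.subadd _ _
      have h3 : 𝔼.E (S n) ≤ 2 * (1/2)^m := by
        have h4 : 𝔼.E (S n) ≤ ∑ k ∈ Finset.range (n+1), 𝔼.E (indBM (D (m+k)) (hDm (m+k))) :=
          𝔼.E_sum_le' _ _
        have h5 : ∀ k, 𝔼.E (indBM (D (m+k)) (hDm (m+k))) ≤ (1/2:ℝ)^(m+k) := by
          intro k
          have := hDcap (m+k)
          rw [SLE.cap, dif_pos (hDm (m+k))] at this
          linarith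
        have h6 : ∑ k ∈ Finset.range (n+1), 𝔼.E (indBM (D (m+k)) (hDm (m+k)))
            ≤ ∑ k ∈ Finset.range (n+1), (1/2:ℝ)^(m+k) :=
          Finset.sum_le_sum fun k _ => h5 k
        have h7 : ∑ k ∈ Finset.range (n+1), (1/2:ℝ)^(m+k)
            = (1/2:ℝ)^m * ∑ k ∈ Finset.range (n+1), (1/2:ℝ)^k := by
          rw [Finset.mul_sum]
          exact Finset.sum_congr rfl fun k _ => (pow_add _ _ _)
        have h8 : ∑ k ∈ Finset.range (n+1), (1/2:ℝ)^k ≤ 2 := sum_geometric_two_le _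
        have h9 : (1/2:ℝ)^m * ∑ k ∈ Finset.range (n+1), (1/2:ℝ)^k ≤ (1/2:ℝ)^m * 2 :=
          mul_le_mul_of_nonneg_left h8 (le_of_lt (hpos m))
        calc 𝔼.E (S n) ≤ _ := h4
          _ ≤ _ := h6
          _ = _ := h7
          _ ≤ (1/2:ℝ)^m * 2 := h9
          _ = 2 * (1/2)^m := by ring
      linarith
    have : Tendsto (fun n => 𝔼.E (g n) + 2 * (1/2:ℝ)^m) atTop (𝓝 (0 + 2 * (1/2)^m)) :=
      hEtend.add_const _
    have := ge_of_tendsto' this hbound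
    linarith
  -- the polar set
  have hcapN : 𝔼.cap Nset = 0 := by
    have hle : ∀ m, 𝔼.cap Nset ≤ 2 * (1/2:ℝ)^m := fun m =>
      (𝔼.cap_mono' hNm (hBm m) (Set.iInter_subset _ m)).trans (hcapB m)
    have htend : Tendsto (fun m : ℕ => 2 * (1/2:ℝ)^m) atTop (𝓝 0) := by
      have := tendsto_pow_atTop_nhds_zero_of_lt_one (by norm_num : (0:ℝ) ≤ 1/2)
        (by norm_num : (1/2:ℝ) < 1)
      simpa using this.const_mul 2
    have := ge_of_tendsto' htend hle
    have := 𝔼.cap_nonneg' Nset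
    linarith
  -- convergence off Nset
  have hconv : ∀ ω ∉ Nset, ∃ l, Tendsto (fun k => (ξ (φ k) : Ω → ℝ) ω) atTop (𝓝 l) := by
    intro ω hω
    obtain ⟨m, hm⟩ : ∃ m, ω ∉ B m := by
      by_contra h
      push_neg at h
      exact hω (Set.mem_iInter.2 h)
    have hD : ∀ k, ω ∉ D (m + k) := fun k hk => hm (Set.mem_iUnion.2 ⟨k, hk⟩)
    have hdist : ∀ k, |(ξ (φ (m+k+1)) : Ω → ℝ) ω - (ξ (φ (m+k)) : Ω → ℝ) ω| ≤ (1/2:ℝ)^(m+k) :=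
      fun k => le_of_not_gt fun h => hD k h
    set u : ℕ → ℝ := fun k => (ξ (φ (k + m)) : Ω → ℝ) ω with hudef
    have hcseq : CauchySeq u := by
      apply cauchySeq_of_le_geometric (1/2) ((1/2:ℝ)^m) (by norm_num)
      intro k
      have h1 : dist (u k) (u (k+1)) = |(ξ (φ (m+k+1)) : Ω → ℝ) ω - (ξ (φ (m+k)) : Ω → ℝ) ω| := by
        rw [Real.dist_eq, abs_sub_comm]
        show |(ξ (φ (k+1+m)) : Ω → ℝ) ω - (ξ (φ (k+m)) : Ω → ℝ) ω| = _
        rw [show k+1+m = m+k+1 from by omega, show k+m = m+k from by omega]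
      rw [h1]
      calc _ ≤ (1/2:ℝ)^(m+k) := hdist k
        _ = (1/2:ℝ)^m * (1/2)^k := pow_add _ _ _
    obtain ⟨l, hl⟩ := cauchySeq_tendsto_of_complete hcseq
    exact ⟨l, (tendsto_add_atTop_iff_nat m).1 hl⟩
  -- build the limit function
  set η : ℕ → Ω → ℝ := fun k => Nsetᶜ.indicator (fun ω => (ξ (φ k) : Ω → ℝ) ω) with hηdef
  have hηm : ∀ k, Measurable (η k) := fun k => (BM.measurable (ξ (φ k))).indicator hNm.compl
  have hηconv : ∀ ω, ∃ l, Tendsto (fun k => η k ω) atTop (𝓝 l) := by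
    intro ω
    by_cases h : ω ∈ Nset
    · refine ⟨0, ?_⟩
      have : ∀ k, η k ω = 0 := fun k => Set.indicator_of_notMem (by simp [h]) _
      simp only [this]
      exact tendsto_const_nhds
    · obtain ⟨l, hl⟩ := hconv ω h
      refine ⟨l, ?_⟩
      have : ∀ k, η k ω = (ξ (φ k) : Ω → ℝ) ω := fun k =>
        Set.indicator_of_mem (Set.mem_compl h) _
      simpa [this] using hl
  choose ξ₀ hξ₀ using hηconv
  have hξ₀m : Measurable ξ₀ :=
    measurable_of_tendsto_metrizable' atTop hηm (tendsto_pi_nhds.2 hξ₀)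
  refine ⟨φ, hφmono, ξ₀, hξ₀m, Nset, hNm, hcapN, fun ω hω => ?_⟩
  have : ∀ k, η k ω = (ξ (φ k) : Ω → ℝ) ω := fun k =>
    Set.indicator_of_mem (Set.mem_compl hω) _
  have h := hξ₀ ω
  simpa [this] using h
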